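/- Let (S,T) be a medium and define δ(S,V) = ℓ(m) if S ≠ V and m is a concise message with Sm = V, and δ(S,V) = 0 if S = V. Then δ is well-defined and is a metric on S: δ(S,V) = 0 if and only if S = V, δ(S,V) = δ(V,S), and δ(S,W) ≤ δ(S,V) + δ(V,W) for all states S, V, W. -/

import Mathlib

open scoped Classical symmDiff

universe u

namespace Media

variable {S : Type u}

/-- The state obtained by applying the message (string of tokens) `m` to the state `s`. -/
def apply (s : S) (m : List (S → S)) : S :=
  m.foldl (fun x τ => τ x) s

/-- The sequence of states `S₀ = s, S₁, …, Sₙ` produced by the message `m` from the state `s`. -/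
def produced (s : S) (m : List (S → S)) : List S :=
  m.scanl (fun x τ => τ x) s

/-- `τ'` is a reverse of the token `τ`. -/
def IsReverse (τ τ' : S → S) : Prop :=
  ∀ P Q : S, P ≠ Q → (τ P = Q ↔ τ' Q = P)

/-- The message `m` is stepwise effective for the state `s`. -/
def StepwiseEffective (s : S) (m : List (S → S)) : Prop :=
  List.Chain' (· ≠ ·) (produced s m)

/-- The message `m` is consistent: it does not contain both a token and its reverse. -/
def Consistent (m : List (S → S)) : Prop :=
  ∀ τ ∈ m, ∀ τ' ∈ m, ¬ IsReverse τ τ'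

/-- The message `m` is concise for the state `s`. -/
def Concise (s : S) (m : List (S → S)) : Prop :=
  StepwiseEffective s m ∧ Consistent m ∧ m.Nodup

/-- The message `m` is vacuous: its indices can be partitioned into pairs of
mutually reverse tokens. -/
def Vacuous (m : List (S → S)) : Prop :=
  ∃ f : Fin m.length → Fin m.length, Function.Involutive f ∧
    (∀ i, f i ≠ i) ∧ ∀ i, IsReverse (m.get i) (m.get (f i))

/-- The message `m` is closed for the state `s`. -/
def Closed (s : S) (m : List (S → S)) : Prop :=
  StepwiseEffective s m ∧ apply s m = s

/-- `(S, T)` is a medium: a token system satisfying axioms [M1] and [M2]. -/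
def IsMedium (T : Set (S → S)) : Prop :=
  (∃ a b : S, a ≠ b) ∧ T.Nonempty ∧ (∀ τ ∈ T, τ ≠ id) ∧
  (∀ P Q : S, P ≠ Q →
    ∃ m : List (S → S), (∀ τ ∈ m, τ ∈ T) ∧ Concise P m ∧ apply P m = Q) ∧
  (∀ (P : S) (m : List (S → S)), (∀ τ ∈ m, τ ∈ T) → Closed P m → Vacuous m)

end Media

open Media

universe v
variable {S : Type u}

namespace MediaAux

lemma apply_cons (s : S) (τ : S → S) (m : List (S → S)) : apply s (τ :: m) = apply (τ s) m := rfl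

lemma apply_append (s : S) (m n : List (S → S)) : apply s (m ++ n) = apply (apply s m) n :=
  List.foldl_append ..

lemma produced_cons (s : S) (τ : S → S) (m : List (S → S)) :
    produced s (τ :: m) = s :: produced (τ s) m := List.scanl_cons

lemma produced_nil (s : S) : produced s ([] : List (S → S)) = [s] := rfl

lemma head?_produced (s : S) (m : List (S → S)) : (produced s m).head? = some s := by
  cases m <;> simp [produced_cons, produced_nil]

lemma se_cons {s : S} {τ : S → S} {m : List (S → S)} :
    StepwiseEffective s (τ :: m) ↔ s ≠ τ s ∧ StepwiseEffective (τ s) m := by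
  unfold StepwiseEffective
  rw [produced_cons]; simp only [List.Chain', List.isChain_cons]
  constructor
  · rintro ⟨h1, h2⟩
    exact ⟨h1 (τ s) (by simp [head?_produced]), h2⟩
  · rintro ⟨h1, h2⟩
    refine ⟨fun y hy => ?_, h2⟩
    rw [head?_produced] at hy
    cases hy; exact h1

lemma se_nil (s : S) : StepwiseEffective s ([] : List (S → S)) := by
  unfold StepwiseEffective; simp [produced_nil, List.Chain', List.isChain_singleton]

lemma se_append {s : S} {m n : List (S → S)} (hm : StepwiseEffective s m)
    (hn : StepwiseEffective (apply s m) n) : StepwiseEffective s (m ++ n) := by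
  induction m generalizing s with
  | nil => simpa [apply] using hn
  | cons τ m ih =>
    rw [apply_cons] at hn
    rw [se_cons] at hm
    rw [List.cons_append, se_cons]
    exact ⟨hm.1, ih hm.2 hn⟩

lemma isReverse_symm {τ τ' : S → S} (h : IsReverse τ τ') : IsReverse τ' τ :=
  fun P Q hPQ => (h Q P hPQ.symm).symm

lemma rev_apply {τ a : S → S} (h : IsReverse τ a) {P Q : S} (hne : P ≠ Q) (hPQ : τ P = Q) :
    a Q = P := (h P Q hne).mp hPQ

lemma rev_apply' {τ a : S → S} (h : IsReverse τ a) {P Q : S} (hne : P ≠ Q) (haQ : a Q = P) :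
    τ P = Q := (h P Q hne).mpr haQ

lemma isReverse_unique {τ a b : S → S} (ha : IsReverse τ a) (hb : IsReverse τ b) : a = b := by
  funext Q
  by_cases h1 : a Q = Q <;> by_cases h2 : b Q = Q
  · rw [h1, h2]
  · exfalso
    have ht : τ (b Q) = Q := rev_apply' hb h2 rfl
    have : a Q = b Q := rev_apply ha h2 ht
    exact h2 (this ▸ h1)
  · exfalso
    have ht : τ (a Q) = Q := rev_apply' ha h1 rfl
    have : b Q = a Q := rev_apply hb h1 ht
    exact h1 (this ▸ h2)
  · have ht : τ (a Q) = Q := rev_apply' ha h1 rfl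
    exact (rev_apply hb h1 ht).symm

lemma exists_rev {T : Set (S → S)} (hM : IsMedium T) {τ : S → S} (hτ : τ ∈ T) :
    ∃ τ' ∈ T, IsReverse τ τ' := by
  obtain ⟨-, -, hid, M1, M2⟩ := hM
  have hne : ∃ s : S, τ s ≠ s := by
    by_contra h
    push_neg at h
    exact hid τ hτ (funext h)
  obtain ⟨s, hs⟩ := hne
  obtain ⟨n, hnT, hnc, hna⟩ := M1 (τ s) s hs
  have hclosed : Closed s (τ :: n) := by
    refine ⟨se_cons.mpr ⟨Ne.symm hs, hnc.1⟩, ?_⟩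
    rw [apply_cons, hna]
  have hvac : Vacuous (τ :: n) := by
    refine M2 s (τ :: n) ?_ hclosed
    intro x hx
    rcases List.mem_cons.mp hx with h | h
    · exact h ▸ hτ
    · exact hnT x h
  obtain ⟨f, hinv, hfix, hrev⟩ := hvac
  have h0 : (0 : ℕ) < (τ :: n).length := by simp
  refine ⟨(τ :: n).get (f ⟨0, h0⟩), ?_, ?_⟩
  · have : (τ :: n).get (f ⟨0, h0⟩) ∈ τ :: n := List.get_mem _ _
    rcases List.mem_cons.mp this with h | h
    · rw [h]; exact hτ
    · exact hnT _ h
  · exact hrev ⟨0, h0⟩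

/-- A choice of reverse token. -/
noncomputable def rev (T : Set (S → S)) (τ : S → S) : S → S :=
  if h : ∃ τ' ∈ T, IsReverse τ τ' then h.choose else τ

lemma rev_mem {T : Set (S → S)} (hM : IsMedium T) {τ : S → S} (hτ : τ ∈ T) : rev T τ ∈ T := by
  rw [rev, dif_pos (exists_rev hM hτ)]
  exact (exists_rev hM hτ).choose_spec.1

lemma rev_isReverse {T : Set (S → S)} (hM : IsMedium T) {τ : S → S} (hτ : τ ∈ T) :
    IsReverse τ (rev T τ) := by
  rw [rev, dif_pos (exists_rev hM hτ)]
  exact (exists_rev hM hτ).choose_spec.2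

/-- The reverse of a message. -/
noncomputable def revmsg (T : Set (S → S)) (m : List (S → S)) : List (S → S) :=
  (m.map (rev T)).reverse

lemma revmsg_length (T : Set (S → S)) (m : List (S → S)) : (revmsg T m).length = m.length := by
  simp [revmsg]

lemma mem_revmsg {T : Set (S → S)} {m : List (S → S)} {x : S → S} (hx : x ∈ revmsg T m) :
    ∃ τ ∈ m, x = rev T τ := by
  rw [revmsg, List.mem_reverse, List.mem_map] at hx
  obtain ⟨τ, hτ, h⟩ := hx
  exact ⟨τ, hτ, h.symm⟩

lemma revmsg_mem_T {T : Set (S → S)} (hM : IsMedium T) {m : List (S → S)}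
    (hmT : ∀ τ ∈ m, τ ∈ T) : ∀ x ∈ revmsg T m, x ∈ T := by
  intro x hx
  obtain ⟨τ, hτ, h⟩ := mem_revmsg hx
  exact h ▸ rev_mem hM (hmT τ hτ)

lemma revmsg_se_apply {T : Set (S → S)} (hM : IsMedium T) {s : S} {m : List (S → S)}
    (hmT : ∀ τ ∈ m, τ ∈ T) (hse : StepwiseEffective s m) :
    StepwiseEffective (apply s m) (revmsg T m) ∧ apply (apply s m) (revmsg T m) = s := by
  induction m generalizing s with
  | nil => exact ⟨se_nil s, rfl⟩
  | cons τ m ih =>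
    rw [se_cons] at hse
    obtain ⟨hs, hse'⟩ := hse
    have hτT : τ ∈ T := hmT τ (List.mem_cons_self)
    have hmT' : ∀ x ∈ m, x ∈ T := fun x hx => hmT x (List.mem_cons_of_mem τ hx)
    obtain ⟨ih1, ih2⟩ := ih hmT' hse'
    have hrm : revmsg T (τ :: m) = revmsg T m ++ [rev T τ] := by
      simp [revmsg]
    have hrs : rev T τ (τ s) = s := rev_apply (rev_isReverse hM hτT) hs rfl
    rw [apply_cons, hrm]
    constructor
    · refine se_append ih1 ?_
      rw [ih2, se_cons]
      refine ⟨?_, se_nil _⟩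
      rw [hrs]
      exact Ne.symm hs
    · rw [apply_append, ih2]
      exact hrs

/-- Core lemma: a concise message is no longer than any stepwise effective message
with the same endpoints. -/
lemma concise_length_le {T : Set (S → S)} (hM : IsMedium T) {s w : S} {p q : List (S → S)}
    (hpT : ∀ τ ∈ p, τ ∈ T) (hqT : ∀ τ ∈ q, τ ∈ T)
    (hp : Concise s p) (hpa : apply s p = w)
    (hq : StepwiseEffective s q) (hqa : apply s q = w) : p.length ≤ q.length := by
  obtain ⟨hrse, hra⟩ := revmsg_se_apply hM hpT hp.1
  rw [hpa] at hrse hra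
  set u : List (S → S) := q ++ revmsg T p with hu
  have huT : ∀ τ ∈ u, τ ∈ T := by
    intro τ hτ
    rcases List.mem_append.mp hτ with h | h
    · exact hqT τ h
    · exact revmsg_mem_T hM hpT τ h
  have huc : Closed s u := by
    refine ⟨se_append hq (hqa ▸ hrse), ?_⟩
    rw [apply_append, hqa, hra]
  obtain ⟨f, hinv, hfix, hrev⟩ := hM.2.2.2.2 s u huT huc
  have hul : u.length = q.length + p.length := by
    simp [hu, revmsg_length]
  -- tokens at indices ≥ q.length lie in `revmsg T p`
  have hmemr : ∀ i : Fin u.length, q.length ≤ (i : ℕ) → ∃ τ ∈ p, u.get i = rev T τ := by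
    intro i hi
    have hlt : (i : ℕ) - q.length < (revmsg T p).length := by
      have h1 := i.2; rw [revmsg_length]; omega
    have : u.get i = (revmsg T p).get ⟨(i : ℕ) - q.length, hlt⟩ := by
      simp only [List.get_eq_getElem]
      exact List.getElem_append_right hi
    rw [this]
    exact mem_revmsg (List.get_mem _ _)
  -- f sends the p-part into the q-part
  have hkey : ∀ i : Fin u.length, q.length ≤ (i : ℕ) → ((f i : ℕ)) < q.length := by
    intro i hi
    by_contra hge
    push_neg at hge
    obtain ⟨a, ha, hua⟩ := hmemr i hi
    obtain ⟨b, hb, hub⟩ := hmemr (f i) hge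
    have hr : IsReverse (rev T a) (rev T b) := by
      have := hrev i
      rwa [hua, hub] at this
    have hra : IsReverse (rev T a) a := isReverse_symm (rev_isReverse hM (hpT a ha))
    have hab : a = rev T b := isReverse_unique hra hr
    have : IsReverse b a := hab ▸ rev_isReverse hM (hpT b hb)
    exact hp.2.1 b hb a ha this
  -- build an injection Fin p.length → Fin q.length
  have hq0 : p.length ≤ q.length := by
    have hcard := Fintype.card_le_of_injective
      (fun j : Fin p.length =>
        (⟨(f ⟨q.length + (j : ℕ), by omega⟩ : Fin u.length),
          hkey ⟨q.length + (j : ℕ), by omega⟩ (by simp)⟩ : Fin q.length)) ?_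
    · simpa using hcard
    · intro j j' h
      have h' := congrArg Fin.val h
      simp only at h'
      have h2 := hinv.injective (Fin.ext h')
      have hv := congrArg Fin.val h2
      simp only at hv
      exact Fin.ext (by omega)
  exact hq0

lemma revmsg_concise {T : Set (S → S)} (hM : IsMedium T) {s v : S} {p : List (S → S)}
    (hpT : ∀ τ ∈ p, τ ∈ T) (hp : Concise s p) (hpa : apply s p = v) :
    Concise v (revmsg T p) := by
  refine ⟨?_, ?_, ?_⟩
  · have := (revmsg_se_apply hM hpT hp.1).1
    rwa [hpa] at this
  · intro α hα β hβ hr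
    obtain ⟨a, ha, rfl⟩ := mem_revmsg hα
    obtain ⟨b, hb, rfl⟩ := mem_revmsg hβ
    have hra : IsReverse (rev T a) a := isReverse_symm (rev_isReverse hM (hpT a ha))
    have hab : a = rev T b := isReverse_unique hra hr
    have : IsReverse b a := hab ▸ rev_isReverse hM (hpT b hb)
    exact hp.2.1 b hb a ha this
  · rw [revmsg, List.nodup_reverse]
    refine hp.2.2.map_on ?_
    intro x hx y hy hxy
    have h1 : IsReverse (rev T x) x := isReverse_symm (rev_isReverse hM (hpT x hx))
    have h2 : IsReverse (rev T x) y := by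
      rw [hxy]; exact isReverse_symm (rev_isReverse hM (hpT y hy))
    exact isReverse_unique h1 h2

end MediaAux


open MediaAux

/-- Theorem 5.1: the function `δ` on pairs of states, defined by `δ(s, v) = ℓ(m)`
for a concise message `m` producing `v` from `s` (and `δ(s, s) = 0`), is
well-defined and is a metric on the set of states. -/
theorem medium_delta_metric {S : Type u} {T : Set (S → S)} (hM : IsMedium T) :
    ∃ δ : S → S → ℕ,
      (∀ s : S, δ s s = 0) ∧
      (∀ (s v : S) (m : List (S → S)), s ≠ v → (∀ τ ∈ m, τ ∈ T) →
        Concise s m → apply s m = v → δ s v = m.length) ∧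
      (∀ s v : S, (δ s v = 0 ↔ s = v)) ∧
      (∀ s v : S, δ s v = δ v s) ∧
      (∀ s v w : S, δ s w ≤ δ s v + δ v w) := by
  classical
  have M1 := hM.2.2.2.1
  set δ : S → S → ℕ := fun s v =>
    if h : s = v then 0 else (M1 s v h).choose.length with hδdef
  have hrefl : ∀ s, δ s s = 0 := fun s => dif_pos rfl
  have hne : ∀ (s v : S) (h : s ≠ v), δ s v = (M1 s v h).choose.length :=
    fun s v h => dif_neg h
  have hwd : ∀ (s v : S) (m : List (S → S)), s ≠ v → (∀ τ ∈ m, τ ∈ T) →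
      Concise s m → apply s m = v → δ s v = m.length := by
    intro s v m h hmT hmc hma
    obtain ⟨hpT, hpc, hpa⟩ := (M1 s v h).choose_spec
    rw [hne s v h]
    exact le_antisymm (concise_length_le hM hpT hmT hpc hpa hmc.1 hma)
      (concise_length_le hM hmT hpT hmc hma hpc.1 hpa)
  have hzero : ∀ s v : S, δ s v = 0 ↔ s = v := by
    intro s v
    constructor
    · intro h0
      by_contra h
      obtain ⟨hpT, hpc, hpa⟩ := (M1 s v h).choose_spec
      rw [hne s v h] at h0
      have hnil := List.length_eq_zero_iff.mp h0
      rw [hnil] at hpa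
      exact h hpa
    · rintro rfl; exact hrefl s
  have hsymm : ∀ s v : S, δ s v = δ v s := by
    intro s v
    by_cases h : s = v
    · rw [h]
    · obtain ⟨hpT, hpc, hpa⟩ := (M1 s v h).choose_spec
      have hrT := revmsg_mem_T hM hpT
      have hrc : Concise v (revmsg T (M1 s v h).choose) :=
        revmsg_concise hM hpT hpc hpa
      have hra : apply v (revmsg T (M1 s v h).choose) = s := by
        have := (revmsg_se_apply hM hpT hpc.1).2
        rwa [hpa] at this
      rw [hne s v h, hwd v s _ (Ne.symm h) hrT hrc hra, revmsg_length]
  have htri : ∀ s v w : S, δ s w ≤ δ s v + δ v w := by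
    intro s v w
    by_cases hsw : s = w
    · rw [hsw, hrefl w]; exact Nat.zero_le _
    by_cases hsv : s = v
    · rw [hsv, hrefl v, Nat.zero_add]
    by_cases hvw : v = w
    · rw [hvw, hrefl w, Nat.add_zero]
    obtain ⟨hmT, hmc, hma⟩ := (M1 s v hsv).choose_spec
    obtain ⟨hnT, hnc, hna⟩ := (M1 v w hvw).choose_spec
    obtain ⟨hpT, hpc, hpa⟩ := (M1 s w hsw).choose_spec
    set m := (M1 s v hsv).choose
    set n := (M1 v w hvw).choose
    have hqT : ∀ τ ∈ m ++ n, τ ∈ T := by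
      intro τ hτ
      rcases List.mem_append.mp hτ with h | h
      · exact hmT τ h
      · exact hnT τ h
    have hqse : StepwiseEffective s (m ++ n) := by
      refine se_append hmc.1 ?_
      rw [hma]; exact hnc.1
    have hqa : apply s (m ++ n) = w := by
      rw [apply_append, hma, hna]
    have hle : (M1 s w hsw).choose.length ≤ (m ++ n).length :=
      concise_length_le hM hpT hqT hpc hpa hqse hqa
    rw [hne s w hsw, hne s v hsv, hne v w hvw]
    rw [List.length_append] at hle
    exact hle
  exact ⟨δ, hrefl, hwd, hzero, hsymm, htri⟩
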